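/- Let L = L₀ ⊕ L₁ be a nilpotent complex Leibniz superalgebra with dim L₀ = n ≥ 3 and dim L₁ = m ≥ 2, such that for every x ∈ L₀ \ L₀² the operator R_x^{n−2} vanishes on L₀ and R_x^{m−1} vanishes on L₁ (i.e., its characteristic sequence (n₁, …, n_k | m₁, …, m_s) satisfies n₁ ≤ n−2 and m₁ ≤ m−1). Suppose L is generated by two elements both lying in the odd part L₁. Then the nilindex of L is less than n + m; equivalently, L^{n+m−1} = 0. -/

import Mathlib

/-- A complex Leibniz superalgebra: a complex vector space `V` with an internal
direct-sum decomposition `V = L0 ⊕ L1`, a bilinear bracket respecting the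
`ℤ/2`-grading and satisfying the Leibniz superidentity (for homogeneous
second and third arguments). -/
structure LeibnizSuper (V : Type) [AddCommGroup V] [Module ℂ V] where
  bracket : V →ₗ[ℂ] V →ₗ[ℂ] V
  L0 : Submodule ℂ V
  L1 : Submodule ℂ V
  compl : IsCompl L0 L1
  g00 : ∀ a ∈ L0, ∀ b ∈ L0, bracket a b ∈ L0
  g01 : ∀ a ∈ L0, ∀ b ∈ L1, bracket a b ∈ L1
  g10 : ∀ a ∈ L1, ∀ b ∈ L0, bracket a b ∈ L1
  g11 : ∀ a ∈ L1, ∀ b ∈ L1, bracket a b ∈ L0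
  super_jacobi : ∀ (x : V) (α β : Bool) (y z : V),
    y ∈ (if α then L1 else L0) → z ∈ (if β then L1 else L0) →
    bracket x (bracket y z) =
      bracket (bracket x y) z - (if α && β then (-1 : ℂ) else 1) • bracket (bracket x z) y

variable {V : Type} [AddCommGroup V] [Module ℂ V]

/-- Descending central series of a Leibniz superalgebra:
`dcs S k` is `L^{k+1}`, i.e. `dcs S 0 = L¹ = L`. -/
def LeibnizSuper.dcs (S : LeibnizSuper V) : ℕ → Submodule ℂ V
  | 0 => ⊤
  | k + 1 => Submodule.span ℂ {v | ∃ a ∈ S.dcs k, ∃ b : V, v = S.bracket a b}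

/-- Descending central series of the even part `L₀` (a Leibniz algebra):
`dcs0 S k` is `L₀^{k+1}`, i.e. `dcs0 S 0 = L₀`. -/
def LeibnizSuper.dcs0 (S : LeibnizSuper V) : ℕ → Submodule ℂ V
  | 0 => S.L0
  | k + 1 => Submodule.span ℂ {v | ∃ a ∈ S.dcs0 k, ∃ b ∈ S.L0, v = S.bracket a b}

/-- `G` generates the superalgebra: the smallest linear subspace containing `G`
and closed under the bracket is all of `V`. -/
def LeibnizSuper.generates (S : LeibnizSuper V) (G : Set V) : Prop :=
  ∀ p : Submodule ℂ V, G ⊆ p → (∀ a ∈ p, ∀ b ∈ p, S.bracket a b ∈ p) → p = ⊤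

/-- The nilindex: the minimal `s ≥ 1` with `L^s = 0`. -/
noncomputable def LeibnizSuper.nilindex (S : LeibnizSuper V) : ℕ :=
  sInf {s | 1 ≤ s ∧ S.dcs (s - 1) = ⊥}

/-- The characteristic-sequence condition `n₁ ≤ n - 2`, `m₁ ≤ m - 1`:
for every `x ∈ L₀ \ L₀²` the right multiplication operator `R_x`
satisfies `R_x^{n-2} = 0` on `L₀` and `R_x^{m-1} = 0` on `L₁`. -/
def LeibnizSuper.charSeqLE (S : LeibnizSuper V) (n m : ℕ) : Prop :=
  ∀ x ∈ S.L0, x ∉ S.dcs0 1 →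
    (∀ v ∈ S.L0, ((S.bracket.flip x : Module.End ℂ V) ^ (n - 2)) v = 0) ∧
    (∀ v ∈ S.L1, ((S.bracket.flip x : Module.End ℂ V) ^ (m - 1)) v = 0)

namespace LeibnizSuper

variable (S : LeibnizSuper V)

@[simp] lemma dcs_zero : S.dcs 0 = ⊤ := rfl

lemma dcs_succ_def (k : ℕ) :
    S.dcs (k+1) = Submodule.span ℂ {v | ∃ a ∈ S.dcs k, ∃ b : V, v = S.bracket a b} := rfl

lemma bracket_mem_dcs_succ {k : ℕ} {u : V} (hu : u ∈ S.dcs k) (v : V) :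
    S.bracket u v ∈ S.dcs (k + 1) :=
  Submodule.subset_span ⟨u, hu, v, rfl⟩

lemma dcs_succ_le : ∀ k : ℕ, S.dcs (k + 1) ≤ S.dcs k := by
  intro k
  induction k with
  | zero => exact le_top
  | succ k ih =>
      rw [dcs_succ_def, Submodule.span_le]
      rintro v ⟨u, hu, w, rfl⟩
      exact S.bracket_mem_dcs_succ (ih hu) w

lemma dcs_antitone : ∀ {i j : ℕ}, i ≤ j → S.dcs j ≤ S.dcs i := by
  intro i j h
  induction j with
  | zero => simp_all
  | succ j ih =>
      rcases Nat.lt_or_ge i (j+1) with h' | h'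
      · exact le_trans (S.dcs_succ_le j) (ih (Nat.lt_succ_iff.mp h'))
      · have : i = j + 1 := le_antisymm h h'
        subst this; exact le_rfl

lemma jac11 (x : V) {y z : V} (hy : y ∈ S.L1) (hz : z ∈ S.L1) :
    S.bracket x (S.bracket y z)
      = S.bracket (S.bracket x y) z + S.bracket (S.bracket x z) y := by
  have h := S.super_jacobi x true true y z (by simpa) (by simpa)
  simpa [sub_neg_eq_add] using h

lemma jac00 (x : V) {y z : V} (hy : y ∈ S.L0) (hz : z ∈ S.L0) :
    S.bracket x (S.bracket y z)
      = S.bracket (S.bracket x y) z - S.bracket (S.bracket x z) y := by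
  have h := S.super_jacobi x false false y z (by simpa) (by simpa)
  simpa using h

lemma jac01 (x : V) {y z : V} (hy : y ∈ S.L0) (hz : z ∈ S.L1) :
    S.bracket x (S.bracket y z)
      = S.bracket (S.bracket x y) z - S.bracket (S.bracket x z) y := by
  have h := S.super_jacobi x false true y z (by simpa) (by simpa)
  simpa using h

lemma jac10 (x : V) {y z : V} (hy : y ∈ S.L1) (hz : z ∈ S.L0) :
    S.bracket x (S.bracket y z)
      = S.bracket (S.bracket x y) z - S.bracket (S.bracket x z) y := by
  have h := S.super_jacobi x true false y z (by simpa) (by simpa)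
  simpa using h

lemma dcs_graded : ∀ k : ℕ, S.dcs k ≤ (S.L0 ⊓ S.dcs k) ⊔ (S.L1 ⊓ S.dcs k) := by
  intro k
  induction k with
  | zero =>
      intro v _
      have hv : v ∈ S.L0 ⊔ S.L1 := by rw [S.compl.sup_eq_top]; trivial
      rcases Submodule.mem_sup.mp hv with ⟨v0, h0, v1, h1, rfl⟩
      exact Submodule.add_mem_sup ⟨h0, by simp⟩ ⟨h1, by simp⟩
  | succ k ih =>
      rw [dcs_succ_def, Submodule.span_le]
      rintro w ⟨u, hu, v, rfl⟩
      rcases Submodule.mem_sup.mp (ih hu) with ⟨u0, hu0, u1, hu1, rfl⟩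
      have hv : v ∈ S.L0 ⊔ S.L1 := by rw [S.compl.sup_eq_top]; trivial
      rcases Submodule.mem_sup.mp hv with ⟨v0, hv0, v1, hv1, rfl⟩
      have hu0d : u0 ∈ S.dcs k := hu0.2
      have hu1d : u1 ∈ S.dcs k := hu1.2
      have e : S.bracket (u0 + u1) (v0 + v1)
          = (S.bracket u0 v0 + S.bracket u1 v1) + (S.bracket u0 v1 + S.bracket u1 v0) := by
        simp [map_add, LinearMap.add_apply]; abel
      rw [e]
      refine Submodule.add_mem_sup (Submodule.add_mem _ ?_ ?_) (Submodule.add_mem _ ?_ ?_)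
      · exact ⟨S.g00 u0 hu0.1 v0 hv0, S.bracket_mem_dcs_succ hu0d v0⟩
      · exact ⟨S.g11 u1 hu1.1 v1 hv1, S.bracket_mem_dcs_succ hu1d v1⟩
      · exact ⟨S.g01 u0 hu0.1 v1 hv1, S.bracket_mem_dcs_succ hu0d v1⟩
      · exact ⟨S.g10 u1 hu1.1 v0 hv0, S.bracket_mem_dcs_succ hu1d v0⟩

lemma dcs_bracket : ∀ (j i : ℕ), ∀ u ∈ S.dcs i, ∀ v ∈ S.dcs j,
    S.bracket u v ∈ S.dcs (i + j + 1) := by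
  intro j
  induction j with
  | zero =>
      intro i u hu v _
      exact S.bracket_mem_dcs_succ hu v
  | succ j ih =>
      intro i u hu v hv
      have hM : S.dcs (j+1) ≤ Submodule.comap (S.bracket u) (S.dcs (i + (j+1) + 1)) := by
        rw [dcs_succ_def, Submodule.span_le]
        rintro w ⟨p, hp, q, rfl⟩
        rcases Submodule.mem_sup.mp (S.dcs_graded j hp) with ⟨p0, hp0, p1, hp1, rfl⟩
        have hq : q ∈ S.L0 ⊔ S.L1 := by rw [S.compl.sup_eq_top]; trivial
        rcases Submodule.mem_sup.mp hq with ⟨q0, hq0, q1, hq1, rfl⟩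
        have e : S.bracket (p0 + p1) (q0 + q1)
            = S.bracket p0 q0 + S.bracket p0 q1 + S.bracket p1 q0 + S.bracket p1 q1 := by
          simp [map_add, LinearMap.add_apply]; abel
        simp only [SetLike.mem_coe]
        rw [Submodule.mem_comap, e, map_add, map_add, map_add]
        have mem1 : ∀ (pp qq : V), pp ∈ S.dcs j →
            S.bracket (S.bracket u pp) qq ∈ S.dcs (i + (j+1) + 1) := by
          intro pp qq hpp
          have h1 : S.bracket u pp ∈ S.dcs (i + j + 1) := ih i u hu pp hpp
          have := S.bracket_mem_dcs_succ h1 qq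
          simpa [Nat.add_assoc, Nat.add_comm, Nat.add_left_comm] using this
        have mem2 : ∀ (pp qq : V), pp ∈ S.dcs j →
            S.bracket (S.bracket u qq) pp ∈ S.dcs (i + (j+1) + 1) := by
          intro pp qq hpp
          have h1 : S.bracket u qq ∈ S.dcs (i + 1) := S.bracket_mem_dcs_succ hu qq
          have h2 : S.bracket (S.bracket u qq) pp ∈ S.dcs ((i+1) + j + 1) := ih (i+1) _ h1 pp hpp
          simpa [Nat.add_assoc, Nat.add_comm, Nat.add_left_comm] using h2
        have t00 : S.bracket u (S.bracket p0 q0) ∈ S.dcs (i + (j+1) + 1) := by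
          rw [S.jac00 u hp0.1 hq0]
          exact Submodule.sub_mem _ (mem1 _ _ hp0.2) (mem2 _ _ hp0.2)
        have t01 : S.bracket u (S.bracket p0 q1) ∈ S.dcs (i + (j+1) + 1) := by
          rw [S.jac01 u hp0.1 hq1]
          exact Submodule.sub_mem _ (mem1 _ _ hp0.2) (mem2 _ _ hp0.2)
        have t10 : S.bracket u (S.bracket p1 q0) ∈ S.dcs (i + (j+1) + 1) := by
          rw [S.jac10 u hp1.1 hq0]
          exact Submodule.sub_mem _ (mem1 _ _ hp1.2) (mem2 _ _ hp1.2)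
        have t11 : S.bracket u (S.bracket p1 q1) ∈ S.dcs (i + (j+1) + 1) := by
          rw [S.jac11 u hp1.1 hq1]
          exact Submodule.add_mem _ (mem1 _ _ hp1.2) (mem2 _ _ hp1.2)
        exact Submodule.add_mem _ (Submodule.add_mem _ (Submodule.add_mem _ t00 t01) t10) t11
      exact Submodule.mem_comap.mp (hM hv)

end LeibnizSuper

open Module

lemma rank_aux {V : Type} [AddCommGroup V] [Module ℂ V] [FiniteDimensional ℂ V]
    (g : V →ₗ[ℂ] V) {p q P Q : Submodule ℂ V}
    (hQP : Q ≤ P)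
    (h1 : p ≤ Submodule.map g P ⊔ q) (h2 : Submodule.map g Q ≤ q) :
    finrank ℂ p + finrank ℂ Q ≤ finrank ℂ P + finrank ℂ q := by
  classical
  set ψ : V →ₗ[ℂ] V ⧸ q := q.mkQ.comp g with hψ
  have h1' : finrank ℂ (Submodule.map ψ P) + finrank ℂ Q ≤ finrank ℂ P := by
    have hrn := LinearMap.finrank_range_add_finrank_ker (ψ.domRestrict P)
    rw [LinearMap.range_domRestrict] at hrn
    have hmem : ∀ y : Q, (⟨y.1, hQP y.2⟩ : P) ∈ LinearMap.ker (ψ.domRestrict P) := by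
      intro y
      have hgy : g y.1 ∈ q := h2 ⟨y.1, y.2, rfl⟩
      show q.mkQ (g y.1) = 0
      rw [Submodule.mkQ_apply, Submodule.Quotient.mk_eq_zero]
      exact hgy
    have hker : finrank ℂ Q ≤ finrank ℂ (LinearMap.ker (ψ.domRestrict P)) := by
      refine LinearMap.finrank_le_finrank_of_injective (f :=
        { toFun := fun y : Q => (⟨⟨y.1, hQP y.2⟩, hmem y⟩ : LinearMap.ker (ψ.domRestrict P))
          map_add' := by intros; apply Subtype.ext; apply Subtype.ext; rfl
          map_smul' := by intros; apply Subtype.ext; apply Subtype.ext; rfl }) ?_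
      intro y1 y2 h
      apply Subtype.ext
      exact congrArg (fun z => z.1.1) h
    omega
  have h2' : finrank ℂ p ≤ finrank ℂ (Submodule.map q.mkQ p) + finrank ℂ q := by
    have hrn := LinearMap.finrank_range_add_finrank_ker (q.mkQ.domRestrict p)
    rw [LinearMap.range_domRestrict] at hrn
    have hker : finrank ℂ (LinearMap.ker (q.mkQ.domRestrict p)) ≤ finrank ℂ q := by
      have hmem : ∀ y : LinearMap.ker (q.mkQ.domRestrict p), y.1.1 ∈ q := by
        intro y
        have : q.mkQ y.1.1 = 0 := y.2
        rwa [Submodule.mkQ_apply, Submodule.Quotient.mk_eq_zero] at this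
      refine LinearMap.finrank_le_finrank_of_injective (f :=
        { toFun := fun y => (⟨y.1.1, hmem y⟩ : q)
          map_add' := by intros; apply Subtype.ext; rfl
          map_smul' := by intros; apply Subtype.ext; rfl }) ?_
      intro y1 y2 h
      apply Subtype.ext; apply Subtype.ext
      exact congrArg (fun z : q => z.1) h
    omega
  have h3 : Submodule.map q.mkQ p ≤ Submodule.map ψ P := by
    refine le_trans (Submodule.map_mono h1) ?_
    rw [Submodule.map_sup, Submodule.mkQ_map_self, Submodule.map_comp]
    simp
  have h4 : finrank ℂ (Submodule.map q.mkQ p) ≤ finrank ℂ (Submodule.map ψ P) :=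
    Submodule.finrank_mono h3
  omega

lemma finrank_span_singleton_le' {V : Type} [AddCommGroup V] [Module ℂ V]
    [FiniteDimensional ℂ V] (v : V) : finrank ℂ (Submodule.span ℂ {v}) ≤ 1 := by
  by_cases hv : v = 0
  · subst hv
    rw [Submodule.span_zero_singleton]
    simp [finrank_bot]
  · rw [finrank_span_singleton hv]

/-- Theorem 3.6 of the paper: case of both generators in the odd
part `L₁`.  The nilindex is less than `n + m`, i.e. `L^{n+m-1} = 0`. -/
theorem leibnizSuper_nilindex_lt_of_odd_generators
    {V : Type} [AddCommGroup V] [Module ℂ V] [FiniteDimensional ℂ V]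
    (S : LeibnizSuper V) (n m : ℕ) (hn : 3 ≤ n) (hm : 2 ≤ m)
    (hdim0 : Module.finrank ℂ S.L0 = n) (hdim1 : Module.finrank ℂ S.L1 = m)
    (hnilp : ∃ s, S.dcs s = ⊥)
    (hchar : S.charSeqLE n m)
    (hgen : ∃ a ∈ S.L1, ∃ b ∈ S.L1, S.generates {a, b}) :
    S.dcs (n + m - 2) = ⊥ := by
  classical
  by_contra A
  obtain ⟨a, haL1, b, hbL1, hgen2⟩ := hgen
  obtain ⟨N, hN⟩ : ∃ N, n = N + 2 := ⟨n - 2, by omega⟩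
  have hN1 : 1 ≤ N := by omega
  -- dimension of the whole space
  have hVdim : finrank ℂ V = n + m := by
    rw [← Submodule.finrank_add_eq_of_isCompl S.compl, hdim0, hdim1]
  -- the span of the generators
  set W : Submodule ℂ V := Submodule.span ℂ {a, b} with hWdef
  have haW : a ∈ W := Submodule.subset_span (by simp)
  have hbW : b ∈ W := Submodule.subset_span (by simp)
  have hWle : W ≤ S.L1 := by
    rw [hWdef, Submodule.span_le]
    rintro v hv
    rcases hv with rfl | rfl
    · exact haL1
    · exact hbL1
  have hWdim : finrank ℂ W ≤ 2 := by
    have hins : W = Submodule.span ℂ {a} ⊔ Submodule.span ℂ {b} := by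
      rw [hWdef, show ({a, b} : Set V) = insert a {b} from rfl, Submodule.span_insert]
    have h2 := Submodule.finrank_sup_add_finrank_inf_eq
      (Submodule.span ℂ {a}) (Submodule.span ℂ {b})
    have ha1 := finrank_span_singleton_le' a
    have hb1 := finrank_span_singleton_le' b
    rw [← hins] at h2
    omega
  -- generation
  have htop : S.dcs 1 ⊔ W = ⊤ := by
    apply hgen2
    · intro v hv
      rcases hv with rfl | rfl
      · exact le_sup_right (α := Submodule ℂ V) haW
      · exact le_sup_right (α := Submodule ℂ V) hbW
    · intro u _ v _
      exact le_sup_left (α := Submodule ℂ V)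
        (S.bracket_mem_dcs_succ (k := 0) Submodule.mem_top v)
  -- disjointness of the grading
  have hdisj : ∀ z : V, z ∈ S.L0 → z ∈ S.L1 → z = 0 := by
    intro z h0 h1
    exact (Submodule.disjoint_def.mp S.compl.disjoint) z h0 h1
  -- L0 is contained in L²
  have hL0le : S.L0 ≤ S.dcs 1 := by
    intro v hv
    have hvtop : v ∈ S.dcs 1 ⊔ W := by rw [htop]; trivial
    rcases Submodule.mem_sup.mp hvtop with ⟨d, hd, w, hw, rfl⟩
    rcases Submodule.mem_sup.mp (S.dcs_graded 1 hd) with ⟨d0, hd0, d1, hd1, rfl⟩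
    have hzero : d1 + w = 0 := by
      apply hdisj
      · have : d0 + d1 + w - d0 ∈ S.L0 := Submodule.sub_mem _ hv hd0.1
        simpa [add_sub_cancel_left, add_assoc] using this
      · exact Submodule.add_mem _ hd1.1 (hWle hw)
    have : d0 + d1 + w = d0 := by rw [add_assoc, hzero, add_zero]
    rw [this]
    exact hd0.2
  -- no-drop lemma
  have hND : ∀ t, S.dcs t = S.dcs (t+1) → S.dcs t = ⊥ := by
    intro t h
    obtain ⟨s, hs⟩ := hnilp
    have hconst : ∀ u, S.dcs (t + u) = S.dcs t := by
      intro u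
      induction u with
      | zero => rfl
      | succ u ih =>
          have : S.dcs (t + u + 1)
              = Submodule.span ℂ {v | ∃ a ∈ S.dcs (t+u), ∃ b : V, v = S.bracket a b} := rfl
          rw [show t + (u+1) = (t+u) + 1 from rfl, this, ih, ← S.dcs_succ_def, ← h]
    have h1 : S.dcs (t + s) = S.dcs t := hconst s
    have h2 : S.dcs (t + s) ≤ S.dcs s := S.dcs_antitone (Nat.le_add_left s t)
    rw [h1, hs] at h2
    exact le_bot_iff.mp h2
  have hstrict : ∀ t, S.dcs t ≠ ⊥ → S.dcs (t+1) < S.dcs t := by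
    intro t ht
    refine lt_of_le_of_ne (S.dcs_succ_le t) (fun heq => ht (hND t heq.symm))
  -- dimension sequence
  have hf0 : finrank ℂ (S.dcs 0) = n + m := by
    rw [LeibnizSuper.dcs_zero, finrank_top]; exact hVdim
  have hfbotz : ∀ t, S.dcs t = ⊥ → finrank ℂ (S.dcs t) = 0 := by
    intro t ht; rw [ht]; exact finrank_bot ℂ V
  have hfpos : ∀ t, S.dcs t ≠ ⊥ → 1 ≤ finrank ℂ (S.dcs t) := by
    intro t ht
    by_contra h
    exact ht (Submodule.finrank_eq_zero.mp (by omega))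
  have hCH : ∀ (d i : ℕ), S.dcs (i + d) ≠ ⊥ →
      finrank ℂ (S.dcs (i + d)) + d ≤ finrank ℂ (S.dcs i) := by
    intro d
    induction d with
    | zero => intro i _; simp
    | succ d ih =>
        intro i h
        have hprev : S.dcs (i + d) ≠ ⊥ := by
          intro hb
          apply h
          rw [show i + (d+1) = (i+d) + 1 from rfl]
          exact le_bot_iff.mp (le_trans (S.dcs_succ_le (i+d)) (le_of_eq hb))
        have hlt : S.dcs ((i+d)+1) < S.dcs (i+d) := hstrict (i+d) hprev
        have hflt : finrank ℂ (S.dcs ((i+d)+1)) < finrank ℂ (S.dcs (i+d)) :=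
          Submodule.finrank_lt_finrank_of_lt hlt
        have := ih i hprev
        have heq : i + (d+1) = (i+d)+1 := rfl
        rw [heq]
        omega
  -- f 1 bounds
  have hf1low : n + m ≤ finrank ℂ (S.dcs 1) + 2 := by
    have h2 := Submodule.finrank_sup_add_finrank_inf_eq (S.dcs 1) W
    rw [htop, finrank_top, hVdim] at h2
    omega
  have hf1high : finrank ℂ (S.dcs 1) + 1 ≤ n + m := by
    have hne : S.dcs 1 ≠ ⊤ := by
      intro heq
      have h0 : S.dcs 0 = S.dcs 1 := by rw [heq]; rfl
      have := hND 0 h0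
      rw [LeibnizSuper.dcs_zero] at this
      have : finrank ℂ (⊥ : Submodule ℂ V) = n + m := by rw [← this, finrank_top]; exact hVdim
      rw [finrank_bot] at this
      omega
    have := Submodule.finrank_lt (K := ℂ) hne
    rw [hVdim] at this
    omega
  -- the key inequality: dimension drops are at most 1 from level 1 on
  have hSS : ∀ k, 1 ≤ k → finrank ℂ (S.dcs k) ≤ finrank ℂ (S.dcs (k+1)) + 1 := by
    have hcases : finrank ℂ (S.dcs 1) + 1 = n + m ∨ finrank ℂ (S.dcs 1) + 2 = n + m := by omega
    rcases hcases with hf1 | hf1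
    · -- single generator case: find c with dcs 1 ⊔ span {c} = ⊤
      have hc : ∃ c : V, S.dcs 1 ⊔ Submodule.span ℂ {c} = ⊤ := by
        by_cases hbD : b ∈ S.dcs 1
        · refine ⟨a, le_antisymm le_top ?_⟩
          rw [← htop]
          refine sup_le le_sup_left ?_
          rw [hWdef, Submodule.span_le]
          rintro v hv
          rcases hv with rfl | rfl
          · exact le_sup_right (α := Submodule ℂ V) (Submodule.mem_span_singleton_self v)
          · exact le_sup_left (α := Submodule ℂ V) hbD
        · refine ⟨b, ?_⟩
          have hlt : S.dcs 1 < S.dcs 1 ⊔ Submodule.span ℂ {b} := by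
            refine lt_of_le_of_ne le_sup_left (fun heq => hbD ?_)
            rw [heq]
            exact le_sup_right (α := Submodule ℂ V) (Submodule.mem_span_singleton_self b)
          have hfr : n + m ≤ finrank ℂ ↥(S.dcs 1 ⊔ Submodule.span ℂ {b}) := by
            have := Submodule.finrank_lt_finrank_of_lt hlt
            omega
          apply Submodule.eq_top_of_finrank_eq
          have hle := Submodule.finrank_le (S.dcs 1 ⊔ Submodule.span ℂ {b})
          omega
      obtain ⟨c, htopc⟩ := hc
      have hg : ∀ k, finrank ℂ (S.dcs k) ≤ finrank ℂ (S.dcs (k+1)) + 1 := by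
        intro k
        induction k with
        | zero =>
            show finrank ℂ (S.dcs 0) ≤ finrank ℂ (S.dcs 1) + 1
            omega
        | succ k ih =>
            have hra := rank_aux (S.bracket.flip c)
              (p := S.dcs (k+1)) (q := S.dcs (k+2)) (P := S.dcs k) (Q := S.dcs (k+1))
              (S.dcs_succ_le k) ?_ ?_
            · show finrank ℂ (S.dcs (k+1)) ≤ finrank ℂ (S.dcs (k+2)) + 1
              omega
            · rw [LeibnizSuper.dcs_succ_def, Submodule.span_le]
              rintro w ⟨u, hu, v, rfl⟩
              have hvtop : v ∈ S.dcs 1 ⊔ Submodule.span ℂ {c} := by rw [htopc]; trivial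
              rcases Submodule.mem_sup.mp hvtop with ⟨d, hd, w', hw', rfl⟩
              rcases Submodule.mem_span_singleton.mp hw' with ⟨s, rfl⟩
              have e : S.bracket u (d + s • c) = S.bracket u d + s • S.bracket u c := by
                rw [map_add, map_smul]
              have e2 : S.bracket u (d + s • c) = s • S.bracket u c + S.bracket u d := by
                rw [e]; abel
              simp only [SetLike.mem_coe]
              rw [e2]
              refine Submodule.add_mem_sup ?_ ?_
              · refine Submodule.smul_mem _ s ?_
                exact Submodule.mem_map.mpr ⟨u, hu, rfl⟩
              · exact S.dcs_bracket 1 k u hu d hd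
            · intro w hw
              rcases Submodule.mem_map.mp hw with ⟨u, hu, rfl⟩
              exact S.bracket_mem_dcs_succ hu c
      intro k _
      exact hg k
    · -- two generator case: counting
      intro k hk
      by_contra hcon
      have hcon' : finrank ℂ (S.dcs (k+1)) + 2 ≤ finrank ℂ (S.dcs k) := by omega
      by_cases hb1 : S.dcs (k+1) = ⊥
      · by_cases hb0 : S.dcs k = ⊥
        · have := hfbotz k hb0
          have := hfbotz (k+1) hb1
          omega
        · have hklarge : n + m - 2 ≤ k := by
            by_contra hsm
            exact A (le_bot_iff.mp (le_trans (S.dcs_antitone (by omega)) (le_of_eq hb1)))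
          obtain ⟨d1, hd1⟩ : ∃ d1, k = 1 + d1 := ⟨k - 1, by omega⟩
          have h5 := hCH d1 1 (by rw [← hd1]; exact hb0)
          rw [← hd1] at h5
          have := hfbotz (k+1) hb1
          have := hfpos k hb0
          omega
      · obtain ⟨M, hDM, hMge, hMge2⟩ :
            ∃ M, S.dcs M ≠ ⊥ ∧ n + m - 2 ≤ M ∧ k + 1 ≤ M := by
          by_cases hcmp : n+m-2 ≤ k+1
          · exact ⟨k+1, hb1, hcmp, le_rfl⟩
          · exact ⟨n+m-2, A, le_rfl, by omega⟩
        obtain ⟨d2, hd2⟩ : ∃ d2, M = (k+1) + d2 := ⟨M - (k+1), by omega⟩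
        have h6 := hCH d2 (k+1) (by rw [← hd2]; exact hDM)
        rw [← hd2] at h6
        obtain ⟨d1, hd1⟩ : ∃ d1, k = 1 + d1 := ⟨k - 1, by omega⟩
        have hb0 : S.dcs k ≠ ⊥ := by
          intro hb
          exact hb1 (le_bot_iff.mp (le_trans (S.dcs_succ_le k) (le_of_eq hb)))
        have h5 := hCH d1 1 (by rw [← hd1]; exact hb0)
        rw [← hd1] at h5
        have := hfpos M hDM
        omega

  -- helper for linearity in the first argument
  have hbr1 : ∀ (u e0 : V) (s : ℂ) (y : V),
      S.bracket u y = S.bracket (u - s • e0) y + s • S.bracket e0 y := by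
    intro u e0 s y
    have h : S.bracket (u - s • e0) y = S.bracket u y - s • S.bracket e0 y := by
      rw [map_sub, map_smul, LinearMap.sub_apply, LinearMap.smul_apply]
    rw [h]; abel
  -- spanning of dcs levels by brackets with generators, refined by parity
  have hSPfull : ∀ k : ℕ, S.dcs (k+1) ≤
      (Submodule.span ℂ {w | ∃ u ∈ S.L0 ⊓ S.dcs k, ∃ y ∈ W, w = S.bracket u y}
        ⊔ Submodule.span ℂ {w | ∃ u ∈ S.L1 ⊓ S.dcs k, ∃ y ∈ W, w = S.bracket u y})
        ⊔ S.dcs (k+2) := by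
    intro k
    rw [LeibnizSuper.dcs_succ_def, Submodule.span_le]
    rintro w ⟨u, hu, v, rfl⟩
    have hvtop : v ∈ S.dcs 1 ⊔ W := by rw [htop]; trivial
    rcases Submodule.mem_sup.mp hvtop with ⟨d, hd, y, hy, rfl⟩
    rcases Submodule.mem_sup.mp (S.dcs_graded k hu) with ⟨u0, hu0, u1, hu1, rfl⟩
    have e : S.bracket (u0 + u1) (d + y)
        = (S.bracket u0 y + S.bracket u1 y) + S.bracket (u0 + u1) d := by
      simp [map_add, LinearMap.add_apply]; abel
    simp only [SetLike.mem_coe]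
    rw [e]
    refine Submodule.add_mem_sup (Submodule.add_mem_sup ?_ ?_) ?_
    · exact Submodule.subset_span ⟨u0, hu0, y, hy, rfl⟩
    · exact Submodule.subset_span ⟨u1, hu1, y, hy, rfl⟩
    · exact S.dcs_bracket 1 k _ hu d hd
  have hXle : ∀ k, Submodule.span ℂ {w | ∃ u ∈ S.L0 ⊓ S.dcs k, ∃ y ∈ W, w = S.bracket u y}
      ≤ S.L1 := by
    intro k
    rw [Submodule.span_le]
    rintro w ⟨u, hu, y, hy, rfl⟩
    exact S.g01 u hu.1 y (hWle hy)
  have hYle : ∀ k, Submodule.span ℂ {w | ∃ u ∈ S.L1 ⊓ S.dcs k, ∃ y ∈ W, w = S.bracket u y}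
      ≤ S.L0 := by
    intro k
    rw [Submodule.span_le]
    rintro w ⟨u, hu, y, hy, rfl⟩
    exact S.g11 u hu.1 y (hWle hy)
  have hSPE : ∀ k : ℕ, S.L0 ⊓ S.dcs (k+1) ≤
      Submodule.span ℂ {w | ∃ u ∈ S.L1 ⊓ S.dcs k, ∃ y ∈ W, w = S.bracket u y}
        ⊔ (S.L0 ⊓ S.dcs (k+2)) := by
    intro k v hv
    rcases Submodule.mem_sup.mp (hSPfull k hv.2) with ⟨t, ht, d, hd, hvsum⟩
    rcases Submodule.mem_sup.mp ht with ⟨xx, hxx, yy, hyy, rfl⟩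
    rcases Submodule.mem_sup.mp (S.dcs_graded (k+2) hd) with ⟨d0, hd0, d1, hd1, rfl⟩
    have hyyd0 : yy + d0 ∈ S.L0 := Submodule.add_mem _ (hYle k hyy) hd0.1
    have hveq : v - (yy + d0) = xx + d1 := by rw [← hvsum]; abel
    have hz : xx + d1 = 0 := by
      apply hdisj
      · rw [← hveq]; exact Submodule.sub_mem _ hv.1 hyyd0
      · exact Submodule.add_mem _ (hXle k hxx) hd1.1
    have hveq2 : v = yy + d0 := by
      have := hveq
      rw [hz, sub_eq_zero] at this
      exact this
    rw [hveq2]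
    exact Submodule.add_mem_sup hyy hd0
  have hSPO : ∀ k : ℕ, S.L1 ⊓ S.dcs (k+1) ≤
      Submodule.span ℂ {w | ∃ u ∈ S.L0 ⊓ S.dcs k, ∃ y ∈ W, w = S.bracket u y}
        ⊔ (S.L1 ⊓ S.dcs (k+2)) := by
    intro k v hv
    rcases Submodule.mem_sup.mp (hSPfull k hv.2) with ⟨t, ht, d, hd, hvsum⟩
    rcases Submodule.mem_sup.mp ht with ⟨xx, hxx, yy, hyy, rfl⟩
    rcases Submodule.mem_sup.mp (S.dcs_graded (k+2) hd) with ⟨d0, hd0, d1, hd1, rfl⟩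
    have hxxd1 : xx + d1 ∈ S.L1 := Submodule.add_mem _ (hXle k hxx) hd1.1
    have hveq : v - (xx + d1) = yy + d0 := by rw [← hvsum]; abel
    have hz : yy + d0 = 0 := by
      apply hdisj
      · exact Submodule.add_mem _ (hYle k hyy) hd0.1
      · rw [← hveq]; exact Submodule.sub_mem _ hv.1 hxxd1
    have hveq2 : v = xx + d1 := by
      have h2 : v - (xx + d1) = 0 := by rw [hveq, hz]
      rw [sub_eq_zero] at h2
      exact h2
    rw [hveq2]
    exact Submodule.add_mem_sup hxx hd1
  -- parity: odd levels have no even part drop etc.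
  have hO1 : S.L1 ⊓ S.dcs 1 ≤ S.dcs 2 := by
    have hX0 : Submodule.span ℂ {w | ∃ u ∈ S.L0 ⊓ S.dcs 0, ∃ y ∈ W, w = S.bracket u y}
        ≤ S.dcs 2 := by
      rw [Submodule.span_le]
      rintro w ⟨u, hu, y, hy, rfl⟩
      exact S.dcs_bracket 0 1 u (hL0le hu.1) y Submodule.mem_top
    exact le_trans (hSPO 0) (sup_le hX0 inf_le_right)
  have hpar : ∀ jj : ℕ, (S.L1 ⊓ S.dcs (2*jj+1) ≤ S.dcs (2*jj+2))
      ∧ (S.L0 ⊓ S.dcs (2*jj+2) ≤ S.dcs (2*jj+3)) := by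
    have hEstep : ∀ t : ℕ, (S.L1 ⊓ S.dcs (t+1) ≤ S.dcs (t+2)) →
        S.L0 ⊓ S.dcs (t+2) ≤ S.dcs (t+3) := by
      intro t hOprev
      have hY : Submodule.span ℂ {w | ∃ u ∈ S.L1 ⊓ S.dcs (t+1), ∃ y ∈ W, w = S.bracket u y}
          ≤ S.dcs (t+3) := by
        rw [Submodule.span_le]
        rintro w ⟨u, hu, y, hy, rfl⟩
        exact S.dcs_bracket 0 (t+2) u (hOprev hu) y Submodule.mem_top
      exact le_trans (hSPE (t+1)) (sup_le hY inf_le_right)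
    have hOstep : ∀ t : ℕ, (S.L0 ⊓ S.dcs (t+1) ≤ S.dcs (t+2)) →
        S.L1 ⊓ S.dcs (t+2) ≤ S.dcs (t+3) := by
      intro t hEprev
      have hX : Submodule.span ℂ {w | ∃ u ∈ S.L0 ⊓ S.dcs (t+1), ∃ y ∈ W, w = S.bracket u y}
          ≤ S.dcs (t+3) := by
        rw [Submodule.span_le]
        rintro w ⟨u, hu, y, hy, rfl⟩
        exact S.dcs_bracket 0 (t+2) u (hEprev hu) y Submodule.mem_top
      exact le_trans (hSPO (t+1)) (sup_le hX inf_le_right)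
    intro jj
    induction jj with
    | zero =>
        refine ⟨hO1, ?_⟩
        exact hEstep 0 hO1
    | succ jj ih =>
        have hOn : S.L1 ⊓ S.dcs (2*jj+3) ≤ S.dcs (2*jj+4) := hOstep (2*jj+1) ih.2
        have hEn : S.L0 ⊓ S.dcs (2*jj+4) ≤ S.dcs (2*jj+5) := hEstep (2*jj+2) hOn
        constructor
        · have e1 : 2*(jj+1)+1 = 2*jj+3 := by ring
          have e2 : 2*(jj+1)+2 = 2*jj+4 := by ring
          rw [e1, e2]; exact hOn
        · have e1 : 2*(jj+1)+2 = 2*jj+4 := by ring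
          have e2 : 2*(jj+1)+3 = 2*jj+5 := by ring
          rw [e1, e2]; exact hEn
  -- the even part drops by at most 1 at each level
  have hgE : ∀ k, 1 ≤ k → finrank ℂ ↥(S.L0 ⊓ S.dcs k)
      ≤ finrank ℂ ↥(S.L0 ⊓ S.dcs (k+1)) + 1 := by
    intro k hk
    have hsup := Submodule.finrank_sup_add_finrank_inf_eq (S.L0 ⊓ S.dcs k) (S.dcs (k+1))
    have hinf : (S.L0 ⊓ S.dcs k) ⊓ S.dcs (k+1) = S.L0 ⊓ S.dcs (k+1) := by
      apply le_antisymm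
      · exact le_inf (le_trans inf_le_left inf_le_left) inf_le_right
      · exact le_inf (le_inf inf_le_left (le_trans inf_le_right (S.dcs_succ_le k))) inf_le_right
    rw [hinf] at hsup
    have hle : finrank ℂ ↥((S.L0 ⊓ S.dcs k) ⊔ S.dcs (k+1)) ≤ finrank ℂ (S.dcs k) :=
      Submodule.finrank_mono (sup_le inf_le_right (S.dcs_succ_le k))
    have := hSS k hk
    omega
  -- even part dimension estimate along odd levels
  have hEI : ∀ jj : ℕ, n ≤ finrank ℂ ↥(S.L0 ⊓ S.dcs (2*jj+1)) + jj := by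
    intro jj
    induction jj with
    | zero =>
        show n ≤ finrank ℂ ↥(S.L0 ⊓ S.dcs 1) + 0
        have hE1 : S.L0 ⊓ S.dcs 1 = S.L0 := inf_eq_left.mpr hL0le
        rw [hE1, hdim0]
        omega
    | succ jj ih =>
        have h1 : finrank ℂ ↥(S.L0 ⊓ S.dcs (2*jj+1))
            ≤ finrank ℂ ↥(S.L0 ⊓ S.dcs (2*jj+2)) + 1 := hgE (2*jj+1) (by omega)
        have hEeq : S.L0 ⊓ S.dcs (2*jj+2) = S.L0 ⊓ S.dcs (2*jj+3) := by
          apply le_antisymm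
          · exact le_inf inf_le_left (hpar jj).2
          · exact inf_le_inf_left _ (S.dcs_succ_le (2*jj+2))
        rw [hEeq] at h1
        have e1 : 2*(jj+1)+1 = 2*jj+3 := by ring
        rw [e1]
        omega
  have hD2N : S.dcs (2*N+1) ≠ ⊥ := by
    intro hb
    have h := hEI N
    rw [hb, inf_bot_eq] at h
    rw [finrank_bot] at h
    omega
  -- choose the element x of the even part of L², not in L³
  have hxex : ∃ x, x ∈ S.L0 ∧ x ∈ S.dcs 1 ∧ x ∉ S.dcs 2 := by
    by_contra hno
    push_neg at hno
    have h12 : S.dcs 1 ≤ S.dcs 2 := by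
      intro v hv
      rcases Submodule.mem_sup.mp (S.dcs_graded 1 hv) with ⟨v0, hv0, v1, hv1, rfl⟩
      exact Submodule.add_mem _ (hno v0 hv0.1 hv0.2) (hO1 hv1)
    have hbot := hND 1 (le_antisymm h12 (S.dcs_succ_le 1))
    exact hD2N (le_bot_iff.mp (le_trans (S.dcs_antitone (by omega)) (le_of_eq hbot)))
  obtain ⟨x, hx0, hx1, hx2⟩ := hxex
  have hxnot : x ∉ S.dcs0 1 := by
    intro hx
    have hsub : S.dcs0 1 ≤ S.dcs 3 := by
      have hdef : S.dcs0 1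
          = Submodule.span ℂ {v | ∃ a ∈ S.dcs0 0, ∃ b ∈ S.L0, v = S.bracket a b} := rfl
      rw [hdef, Submodule.span_le]
      rintro w ⟨u, hu, v, hv, rfl⟩
      exact S.dcs_bracket 1 1 u (hL0le hu) v (hL0le hv)
    exact hx2 (S.dcs_antitone (by omega) (hsub hx))
  -- every level is spanned by a single element modulo the next level
  have hspan : ∀ k, 1 ≤ k → ∀ e, e ∈ S.dcs k → e ∉ S.dcs (k+1) →
      ∀ u ∈ S.dcs k, ∃ s : ℂ, u - s • e ∈ S.dcs (k+1) := by
    intro k hk e he hne u hu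
    have hsupeq : S.dcs (k+1) ⊔ Submodule.span ℂ {e} = S.dcs k := by
      have hle : S.dcs (k+1) ⊔ Submodule.span ℂ {e} ≤ S.dcs k :=
        sup_le (S.dcs_succ_le k) ((Submodule.span_singleton_le_iff_mem e _).mpr he)
      apply Submodule.eq_of_le_of_finrank_le hle
      have hlt : S.dcs (k+1) < S.dcs (k+1) ⊔ Submodule.span ℂ {e} := by
        refine lt_of_le_of_ne le_sup_left (fun heq => hne ?_)
        rw [heq]
        exact le_sup_right (α := Submodule ℂ V) (Submodule.mem_span_singleton_self e)
      have h1 := Submodule.finrank_lt_finrank_of_lt hlt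
      have h2 := hSS k hk
      omega
    rw [← hsupeq] at hu
    rcases Submodule.mem_sup.mp hu with ⟨d, hd, w, hw, hsum⟩
    rcases Submodule.mem_span_singleton.mp hw with ⟨s, rfl⟩
    refine ⟨s, ?_⟩
    have : u - s • e = d := by rw [← hsum]; abel
    rw [this]
    exact hd
  -- vanishing on all generators leads to a contradiction
  have hstep : ∀ k', 1 ≤ k' → k' + 1 ≤ 2*N+1 → ∀ e', e' ∈ S.dcs k' → e' ∉ S.dcs (k'+1) →
      (∀ y ∈ W, S.bracket e' y ∈ S.dcs (k'+2)) → False := by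
    intro k' hk1 hk2 e' he' hne' hall
    have hTle : S.dcs (k'+1) ≤ S.dcs (k'+2) := by
      rw [LeibnizSuper.dcs_succ_def, Submodule.span_le]
      rintro w ⟨u, hu, v, rfl⟩
      have hvtop : v ∈ S.dcs 1 ⊔ W := by rw [htop]; trivial
      rcases Submodule.mem_sup.mp hvtop with ⟨d, hd, y, hy, rfl⟩
      obtain ⟨s, hsd⟩ := hspan k' hk1 e' he' hne' u hu
      simp only [SetLike.mem_coe]
      rw [map_add, hbr1 u e' s y]
      refine Submodule.add_mem _ (S.dcs_bracket 1 k' u hu d hd) (Submodule.add_mem _ ?_ ?_)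
      · exact S.dcs_bracket 0 (k'+1) _ hsd y Submodule.mem_top
      · exact Submodule.smul_mem _ s (hall y hy)
    have heq := hND (k'+1) (le_antisymm hTle (S.dcs_succ_le (k'+1)))
    exact hD2N (le_bot_iff.mp (le_trans (S.dcs_antitone hk2) (le_of_eq heq)))
  -- the key non-vanishing property of right multiplication by x
  have hC : ∀ k, 1 ≤ k → k + 2 ≤ 2*N+1 → ∀ e, e ∈ S.dcs k → e ∉ S.dcs (k+1) →
      S.bracket e x ∉ S.dcs (k+3) := by
    intro k hk1 hk2 e he hnotin H
    have h1 : ∀ u ∈ S.dcs 1, S.bracket e u ∈ S.dcs (k+3) := by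
      intro u hu
      obtain ⟨s, hs⟩ := hspan 1 le_rfl x hx1 hx2 u hu
      have heq : S.bracket e u = S.bracket e (u - s • x) + s • S.bracket e x := by
        rw [map_sub, map_smul]; abel
      rw [heq]
      refine Submodule.add_mem _ ?_ (Submodule.smul_mem _ s H)
      exact S.dcs_bracket 2 k e he (u - s • x) hs
    have hyz : ∀ y ∈ W, ∀ z ∈ W,
        S.bracket (S.bracket e y) z + S.bracket (S.bracket e z) y ∈ S.dcs (k+3) := by
      intro y hy z hz
      rw [← S.jac11 e (hWle hy) (hWle hz)]
      exact h1 _ (S.bracket_mem_dcs_succ (k := 0) Submodule.mem_top z)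
    have h3 : ∃ y₀ ∈ W, S.bracket e y₀ ∉ S.dcs (k+2) := by
      by_contra hno
      push_neg at hno
      exact hstep k hk1 (by omega) e he hnotin hno
    obtain ⟨y₀, hy₀W, hy₀⟩ := h3
    have he'1 : S.bracket e y₀ ∈ S.dcs (k+1) := S.bracket_mem_dcs_succ he y₀
    have h4 : S.bracket (S.bracket e y₀) y₀ ∈ S.dcs (k+3) := by
      have h := hyz y₀ hy₀W y₀ hy₀W
      have heq : S.bracket (S.bracket e y₀) y₀
          = (2:ℂ)⁻¹ • (S.bracket (S.bracket e y₀) y₀ + S.bracket (S.bracket e y₀) y₀) := by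
        rw [← two_smul ℂ, smul_smul]
        norm_num
      rw [heq]
      exact Submodule.smul_mem _ _ h
    have h5 : ∀ z ∈ W, S.bracket (S.bracket e z) y₀ ∈ S.dcs (k+3) := by
      intro z hz
      have hmem : S.bracket e z ∈ S.dcs (k+1) := S.bracket_mem_dcs_succ he z
      obtain ⟨s, hs⟩ := hspan (k+1) (by omega) (S.bracket e y₀) he'1 hy₀ (S.bracket e z) hmem
      rw [hbr1 (S.bracket e z) (S.bracket e y₀) s y₀]
      refine Submodule.add_mem _ ?_ (Submodule.smul_mem _ s h4)
      exact S.dcs_bracket 0 (k+2) _ hs y₀ Submodule.mem_top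
    have h6 : ∀ z ∈ W, S.bracket (S.bracket e y₀) z ∈ S.dcs (k+3) := by
      intro z hz
      have h := hyz y₀ hy₀W z hz
      have h7 := Submodule.sub_mem _ h (h5 z hz)
      simpa using h7
    exact hstep (k+1) (by omega) (by omega) (S.bracket e y₀) he'1 hy₀ h6
  -- iterate: powers of right multiplication by x stay nonzero
  have hiter : ∀ i, i ≤ N →
      (((S.bracket.flip x : Module.End ℂ V) ^ i) x ∈ S.dcs (2*i+1) ∧
       ((S.bracket.flip x : Module.End ℂ V) ^ i) x ∉ S.dcs (2*i+2)) := by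
    intro i
    induction i with
    | zero =>
        intro _
        constructor
        · simpa using hx1
        · simpa using hx2
    | succ i ih =>
        intro hiN
        obtain ⟨hu1, hu2⟩ := ih (by omega)
        have hnext : ((S.bracket.flip x : Module.End ℂ V) ^ (i+1)) x
            = S.bracket (((S.bracket.flip x : Module.End ℂ V) ^ i) x) x := by
          rw [pow_succ', Module.End.mul_apply, LinearMap.flip_apply]
        constructor
        · rw [hnext]
          have h := S.dcs_bracket 1 (2*i+1) _ hu1 x hx1
          have e1 : 2*(i+1)+1 = 2*i+1+1+1 := by ring
          rw [e1]
          exact h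
        · rw [hnext]
          have hCk := hC (2*i+1) (by omega) (by omega) _ hu1 hu2
          have e2 : 2*(i+1)+2 = 2*i+1+3 := by ring
          rw [e2]
          exact hCk
  have hz := (hchar x hx0 hxnot).1 x hx0
  have hNn : n - 2 = N := by omega
  rw [hNn] at hz
  obtain ⟨_, hlast⟩ := hiter N le_rfl
  rw [hz] at hlast
  exact hlast (Submodule.zero_mem _)
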